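/- Let V be a finite-dimensional vector space over ℂ, let D ∈ End(V) be diagonalizable, let N₀ ∈ End(V) be nilpotent, and let (Nᵢ)_{i≥1} be endomorphisms of V such that D commutes with N₀ and with every Nᵢ. Suppose (Fₙ)_{n≥0} is a sequence in End(V) with F₀ = id satisfying, for every n ≥ 0, ad(D)F_{n+1} + (n·id + ad(N₀))Fₙ + ∑_{i=1}^{n} ad(Nᵢ)F_{n−i} = 0, where ad(A)F := AF − FA. Then Fₙ = 0 for all n ≥ 1. -/

import Mathlib

/-- An endomorphism of a vector space is diagonalizable if the eigenspaces span. -/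
def IsDiagonalizable {K V : Type*} [Field K] [AddCommGroup V] [Module K V]
    (D : Module.End K V) : Prop :=
  (⨆ μ : K, D.eigenspace μ) = ⊤

open Polynomial

/-- `aeval` of `mulLeft`. -/
lemma aeval_mulLeft_eq {A : Type*} [Ring A] [Algebra ℂ A] (a : A) (p : ℂ[X]) :
    Polynomial.aeval (LinearMap.mulLeft ℂ a) p = LinearMap.mulLeft ℂ (Polynomial.aeval a p) := by
  induction p using Polynomial.induction_on' with
  | add p q hp hq =>
      rw [map_add, map_add, hp, hq]
      ext x
      simp [add_mul]
  | monomial n c =>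
      rw [aeval_monomial, aeval_monomial]
      ext x
      simp [Module.End.mul_apply, LinearMap.pow_mulLeft, Module.algebraMap_end_apply,
        Algebra.smul_def, mul_assoc]

/-- `aeval` of `mulRight`. -/
lemma aeval_mulRight_eq {A : Type*} [Ring A] [Algebra ℂ A] (a : A) (p : ℂ[X]) :
    Polynomial.aeval (LinearMap.mulRight ℂ a) p = LinearMap.mulRight ℂ (Polynomial.aeval a p) := by
  induction p using Polynomial.induction_on' with
  | add p q hp hq =>
      rw [map_add, map_add, hp, hq]
      ext x
      simp [mul_add]
  | monomial n c =>
      rw [aeval_monomial, aeval_monomial]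
      ext x
      simp [Module.End.mul_apply, LinearMap.pow_mulRight, Module.algebraMap_end_apply,
        Algebra.smul_def, mul_assoc, mul_smul_comm]
      rw [← mul_assoc, Algebra.commutes c x, mul_assoc]

lemma aeval_apply_of_ker {M : Type*} [AddCommGroup M] [Module ℂ M]
    (g : Module.End ℂ M) {x : M} (hx : g x = 0) (r : ℂ[X]) :
    Polynomial.aeval g r x = r.coeff 0 • x := by
  conv_lhs => rw [← divX_mul_X_add r]
  rw [map_add, map_mul, aeval_X, aeval_C]
  simp [Module.End.mul_apply, hx, Module.algebraMap_end_apply]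

/-- For a semisimple endomorphism, kernel and range intersect trivially. -/
lemma ker_inf_range_of_isSemisimple {M : Type*} [AddCommGroup M] [Module ℂ M]
    [FiniteDimensional ℂ M] (g : Module.End ℂ M) (hg : g.IsSemisimple) :
    LinearMap.ker g ⊓ LinearMap.range g = ⊥ := by
  have hsq : Squarefree (minpoly ℂ g) := hg.minpoly_squarefree
  have hann : Polynomial.aeval g (minpoly ℂ g) = 0 := minpoly.aeval ℂ g
  rw [eq_bot_iff]
  intro x hx
  rw [Submodule.mem_inf, LinearMap.mem_ker, LinearMap.mem_range] at hx
  obtain ⟨hxk, y, rfl⟩ := hx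
  rw [Submodule.mem_bot]
  by_cases h0 : (minpoly ℂ g).coeff 0 = 0
  · set q := (minpoly ℂ g).divX with hq
    have hpXq : minpoly ℂ g = q * X := by
      conv_lhs => rw [← divX_mul_X_add (minpoly ℂ g)]
      rw [h0, map_zero, add_zero]
    have hq0 : q.coeff 0 ≠ 0 := by
      intro h
      obtain ⟨r, hr⟩ := X_dvd_iff.mpr h
      have : X * X ∣ minpoly ℂ g := ⟨r, by rw [hpXq, hr]; ring⟩
      exact Polynomial.not_isUnit_X (hsq X this)
    have h1 : Polynomial.aeval g q (g y) = 0 := by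
      have : (Polynomial.aeval g q * g) y = 0 := by
        rw [show Polynomial.aeval g q * g = Polynomial.aeval g (q * X) by
          rw [map_mul, aeval_X], ← hpXq, hann]
        rfl
      simpa [Module.End.mul_apply] using this
    have h2 : Polynomial.aeval g q (g y) = q.coeff 0 • g y := aeval_apply_of_ker g hxk q
    rw [h1] at h2
    exact (smul_eq_zero_iff_right hq0).mp h2.symm
  · have h2 : Polynomial.aeval g (minpoly ℂ g) (g y)
        = (minpoly ℂ g).coeff 0 • g y := aeval_apply_of_ker g hxk _
    rw [hann] at h2
    simp only [LinearMap.zero_apply] at h2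
    exact (smul_eq_zero_iff_right h0).mp h2.symm

/-- If `D` is diagonalizable, there is a squarefree polynomial annihilating it. -/
lemma exists_squarefree_annihilator {V : Type*} [AddCommGroup V] [Module ℂ V]
    [FiniteDimensional ℂ V] (D : Module.End ℂ V) (hD : IsDiagonalizable D) :
    ∃ p : ℂ[X], Squarefree p ∧ Polynomial.aeval D p = 0 := by
  classical
  have hfin : Set.Finite D.HasEigenvalue := D.finite_hasEigenvalue
  refine ⟨∏ μ ∈ hfin.toFinset, (X - C μ), ?_, ?_⟩
  · exact (Polynomial.separable_prod_X_sub_C_iff'.mpr fun x _ y _ h => h).squarefree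
  · have : (⊤ : Submodule ℂ V) ≤ LinearMap.ker (Polynomial.aeval D
        (∏ μ ∈ hfin.toFinset, (X - C μ))) := by
      rw [← hD]
      refine iSup_le fun μ => fun v hv => ?_
      rw [LinearMap.mem_ker]
      by_cases hv0 : v = 0
      · simp [hv0]
      · have hμ : μ ∈ hfin.toFinset := by
          refine (Set.Finite.mem_toFinset hfin).mpr ?_
          exact Module.End.hasEigenvalue_of_hasEigenvector ⟨hv, hv0⟩
        rw [← Finset.prod_erase_mul _ _ hμ, map_mul, Module.End.mul_apply]
        have : (Polynomial.aeval D (X - C μ)) v = 0 := by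
          rw [map_sub, aeval_X, aeval_C]
          simp only [LinearMap.sub_apply, Module.algebraMap_end_apply]
          rw [Module.End.mem_eigenspace_iff.mp hv, sub_self]
        rw [this, map_zero]
    ext v
    simpa using this (Submodule.mem_top (x := v))

theorem flat_endomorphism_rigidity
    {V : Type*} [AddCommGroup V] [Module ℂ V] [FiniteDimensional ℂ V]
    (D N₀ : Module.End ℂ V) (N : ℕ → Module.End ℂ V)
    (hD : IsDiagonalizable D) (hN₀ : IsNilpotent N₀)
    (hDN₀ : D * N₀ = N₀ * D) (hDN : ∀ i, D * N i = N i * D)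
    (F : ℕ → Module.End ℂ V) (hF0 : F 0 = 1)
    (hrec : ∀ n : ℕ,
      (D * F (n + 1) - F (n + 1) * D) +
        ((n : ℂ) • F n + (N₀ * F n - F n * N₀)) +
        ∑ i ∈ Finset.Icc 1 n, (N i * F (n - i) - F (n - i) * N i) = 0) :
    ∀ n : ℕ, 1 ≤ n → F n = 0 := by
  classical
  -- the operator ad(D)
  set adD : Module.End ℂ (Module.End ℂ V) :=
    LinearMap.mulLeft ℂ D - LinearMap.mulRight ℂ D with hadD
  have hadD_apply : ∀ X : Module.End ℂ V, adD X = D * X - X * D := fun X => rfl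
  -- semisimplicity of ad(D)
  obtain ⟨p, hpsq, hpann⟩ := exists_squarefree_annihilator D hD
  have hssL : Module.End.IsSemisimple (LinearMap.mulLeft ℂ D : Module.End ℂ (Module.End ℂ V)) := by
    refine Module.End.isSemisimple_of_squarefree_aeval_eq_zero hpsq ?_
    rw [aeval_mulLeft_eq, hpann]
    ext x; simp
  have hssR : Module.End.IsSemisimple (LinearMap.mulRight ℂ D : Module.End ℂ (Module.End ℂ V)) := by
    refine Module.End.isSemisimple_of_squarefree_aeval_eq_zero hpsq ?_
    rw [aeval_mulRight_eq, hpann]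
    ext x; simp
  have hss : adD.IsSemisimple :=
    Module.End.IsSemisimple.sub_of_commute (LinearMap.commute_mulLeft_right D D) hssL hssR
  have hkr := ker_inf_range_of_isSemisimple adD hss
  -- reduction of the recursion under vanishing hypotheses
  have hred : ∀ m : ℕ, (∀ k, 1 ≤ k → k ≤ m → F k = 0) →
      D * F (m + 1) - F (m + 1) * D = 0 := by
    intro m hm
    have hs : ∑ i ∈ Finset.Icc 1 m, (N i * F (m - i) - F (m - i) * N i) = 0 := by
      refine Finset.sum_eq_zero fun i hi => ?_
      rw [Finset.mem_Icc] at hi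
      rcases eq_or_lt_of_le hi.2 with h | h
      · rw [h, Nat.sub_self, hF0, mul_one, one_mul, sub_self]
      · rw [hm (m - i) (by omega) (by omega), mul_zero, zero_mul, sub_self]
    have heq := hrec m
    rw [hs, add_zero] at heq
    rcases Nat.eq_zero_or_pos m with rfl | hmpos
    · rw [hF0] at heq
      simpa using heq
    · rw [hm m hmpos le_rfl] at heq
      simpa using heq
  -- main induction
  have key : ∀ n : ℕ, ∀ k, 1 ≤ k → k ≤ n → F k = 0 := by
    intro n
    induction n with
    | zero => intro k h1 h2; omega
    | succ n ih =>
      intro k h1 h2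
      rcases Nat.lt_succ_iff_lt_or_eq.mp (Nat.lt_succ_of_le h2) with h | rfl
      · exact ih k h1 (by omega)
      · -- show F (n+1) = 0
        have hcommX : D * F (n + 1) - F (n + 1) * D = 0 := hred n ih
        have hDX : D * F (n + 1) = F (n + 1) * D := sub_eq_zero.mp hcommX
        have hs : ∑ i ∈ Finset.Icc 1 (n + 1),
            (N i * F (n + 1 - i) - F (n + 1 - i) * N i) = 0 := by
          refine Finset.sum_eq_zero fun i hi => ?_
          rw [Finset.mem_Icc] at hi
          rcases eq_or_lt_of_le hi.2 with h | h
          · rw [h, Nat.sub_self, hF0, mul_one, one_mul, sub_self]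
          · rw [ih (n + 1 - i) (by omega) (by omega), mul_zero, zero_mul, sub_self]
        have heq := hrec (n + 1)
        rw [hs, add_zero] at heq
        set X := F (n + 1) with hX
        set Y := ((n + 1 : ℕ) : ℂ) • X + (N₀ * X - X * N₀) with hY
        have heq' : adD (F (n + 2)) + Y = 0 := heq
        have hYrange : Y ∈ LinearMap.range adD :=
          ⟨-(F (n + 2)), by rw [map_neg]; exact neg_eq_of_add_eq_zero_right heq'⟩
        have hYker : Y ∈ LinearMap.ker adD := by
          rw [LinearMap.mem_ker, hadD_apply, sub_eq_zero, hY]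
          simp only [mul_add, add_mul, mul_sub, sub_mul, mul_smul_comm, smul_mul_assoc,
            ← mul_assoc]
          rw [hDX, hDN₀, mul_assoc N₀ D X, hDX, ← mul_assoc, mul_assoc X D N₀, hDN₀,
            ← mul_assoc]
        have hY0 : Y = 0 := by
          have : Y ∈ LinearMap.ker adD ⊓ LinearMap.range adD := ⟨hYker, hYrange⟩
          rwa [hkr, Submodule.mem_bot] at this
        -- invert the operator (n+1) + ad(N₀)
        set T : Module.End ℂ (Module.End ℂ V) :=
          algebraMap ℂ _ ((n + 1 : ℕ) : ℂ) + (LinearMap.mulLeft ℂ N₀ - LinearMap.mulRight ℂ N₀)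
          with hT
        have hTX : T X = 0 := by
          rw [hT]
          simp only [LinearMap.add_apply, LinearMap.sub_apply, LinearMap.mulLeft_apply,
            LinearMap.mulRight_apply, Module.algebraMap_end_apply]
          rw [← hY]
          exact hY0
        have hnil : IsNilpotent (LinearMap.mulLeft ℂ N₀ - LinearMap.mulRight ℂ N₀) :=
          Commute.isNilpotent_sub (LinearMap.commute_mulLeft_right N₀ N₀)
            ((LinearMap.isNilpotent_mulLeft_iff ℂ N₀).mpr hN₀)
            ((LinearMap.isNilpotent_mulRight_iff ℂ N₀).mpr hN₀)
        have hTunit : IsUnit T := by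
          refine hnil.isUnit_add_left_of_commute ?_ (Algebra.commute_algebraMap_right _ _)
          exact (Ne.isUnit (Nat.cast_ne_zero.mpr (Nat.succ_ne_zero n) :
            ((n + 1 : ℕ) : ℂ) ≠ 0)).map (algebraMap ℂ _)
        obtain ⟨u, hu⟩ := hTunit
        calc F (n + 1) = X := rfl
          _ = ((↑u⁻¹ : Module.End ℂ (Module.End ℂ V)) * T) X := by
                rw [← hu, Units.inv_mul, Module.End.one_apply]
          _ = (↑u⁻¹ : Module.End ℂ (Module.End ℂ V)) (T X) := rfl
          _ = 0 := by rw [hTX, map_zero]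
  intro n hn
  exact key n n hn le_rfl
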